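/- arXiv:2206.06886 — 9 statements merged into one kernel-verified Lean document; each statement's English description precedes it below -/
import Mathlib

section
/- Let E : Ω → ℝ be an energy function, β > 0, and let π be the Gibbs distribution π_x = e^{-βE_x}/Z_β with Z_β = Σ_x e^{-βE_x}. Let P be the transition matrix of a propose-accept/reject Markov chain with symmetric proposal matrix S = Σ_{k=1}^κ w_k Π_k and acceptance matrix A with entries in (0,1], a_{xx}=1. Let Q = D^{-1/2} P D^{1/2} be its discriminant matrix, where D = diag(π_x). Then Q = (G ⊙ A) ⊙ S + R, where G is the matrix with entries g_{yx} = e^{βΔ_{yx}/2}, Δ_{yx} = E_y − E_x, and R = Σ_{k=1}^κ w_k Π_k^T ((J − A) ⊙ Π_k). -/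
open Matrix BigOperators

/-- Decomposition of the discriminant matrix of a propose-accept/reject
Markov chain with Gibbs stationary distribution: `Q = (G ⊙ A) ⊙ S + R`, where
`g_{yx} = e^{βΔ_{yx}/2}` and `R = Σ_k w_k Π_kᵀ ((J − A) ⊙ Π_k)`. -/
theorem stmt_3 {Ω : Type*} [Fintype Ω] [DecidableEq Ω]
    (E : Ω → ℝ) (β : ℝ) (hβ : 0 < β)
    (Z : ℝ) (hZ : Z = ∑ x, Real.exp (-β * E x))
    (π : Ω → ℝ) (hπ : ∀ x, π x = Real.exp (-β * E x) / Z)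
    (κ : ℕ) (w : Fin κ → ℝ) (σ : Fin κ → Equiv.Perm Ω)
    (hw_nonneg : ∀ k, 0 ≤ w k) (hw_sum : ∑ k, w k = 1)
    (Pm : Fin κ → Matrix Ω Ω ℝ)
    (hPm : ∀ k v u, Pm k v u = if v = σ k u then 1 else 0)
    (S : Matrix Ω Ω ℝ) (hS : S = ∑ k, w k • Pm k)
    (A : Matrix Ω Ω ℝ) (hA : ∀ y x, A y x ∈ Set.Ioc (0:ℝ) 1)
    (hA_diag : ∀ x, A x x = 1)
    (P : Matrix Ω Ω ℝ)
    (hP_off : ∀ y x, y ≠ x → P y x = A y x * S y x)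
    (hP_diag : ∀ x, P x x = 1 - ∑ y ∈ Finset.univ \ {x}, A y x * S y x)
    (Q : Matrix Ω Ω ℝ)
    (hQ : Q = Matrix.diagonal (fun x => (Real.sqrt (π x))⁻¹) * P *
      Matrix.diagonal (fun x => Real.sqrt (π x)))
    (G : Matrix Ω Ω ℝ) (hG : ∀ y x, G y x = Real.exp (β * (E y - E x) / 2))
    (J : Matrix Ω Ω ℝ) (hJ : ∀ y x, J y x = 1)
    (R : Matrix Ω Ω ℝ)
    (hR : R = ∑ k, w k • ((Pm k)ᵀ * Matrix.hadamard (J - A) (Pm k))) :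
    Q = Matrix.hadamard (Matrix.hadamard G A) S + R := by
  have hπpos : ∀ x : Ω, 0 < π x := by
    intro x
    have hZpos : 0 < Z := by
      rw [hZ]
      exact Finset.sum_pos (fun i _ => Real.exp_pos _) ⟨x, Finset.mem_univ x⟩
    rw [hπ]
    positivity
  have hratio : ∀ y x : Ω, (Real.sqrt (π y))⁻¹ * Real.sqrt (π x) = G y x := by
    intro y x
    have hZpos : 0 < Z := by
      rw [hZ]
      exact Finset.sum_pos (fun i _ => Real.exp_pos _) ⟨x, Finset.mem_univ x⟩
    have hsZ : Real.sqrt Z ≠ 0 := by positivity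
    have hey : Real.exp (-β * E y / 2) ≠ 0 := Real.exp_ne_zero _
    rw [hG, hπ x, hπ y, Real.sqrt_div (Real.exp_pos _).le,
        Real.sqrt_div (Real.exp_pos _).le, ← Real.exp_half, ← Real.exp_half]
    have h2 : Real.exp (β * (E y - E x) / 2)
        = Real.exp (-β * E x / 2) / Real.exp (-β * E y / 2) := by
      rw [← Real.exp_sub]; congr 1; ring
    rw [h2]
    field_simp
  have hSyx : ∀ y x : Ω, S y x = ∑ k, w k * (if y = σ k x then (1:ℝ) else 0) := by
    intro y x
    rw [hS]
    simp only [Matrix.sum_apply, Matrix.smul_apply, hPm, smul_eq_mul]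
  have hRyx : ∀ y x : Ω, R y x =
      ∑ k, w k * ((1 - A (σ k y) x) * (if σ k y = σ k x then (1:ℝ) else 0)) := by
    intro y x
    rw [hR]
    simp only [Matrix.sum_apply, Matrix.smul_apply, Matrix.mul_apply,
      Matrix.transpose_apply, Matrix.hadamard_apply, Matrix.sub_apply, hPm, hJ,
      smul_eq_mul]
    refine Finset.sum_congr rfl fun k _ => ?_
    congr 1
    rw [Finset.sum_eq_single (σ k y)]
    · simp
    · intro z _ hz; simp [hz]
    · simp
  have hQyx : ∀ y x : Ω, Q y x = (Real.sqrt (π y))⁻¹ * P y x * Real.sqrt (π x) := by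
    intro y x
    rw [hQ]
    simp [Matrix.mul_diagonal, Matrix.diagonal_mul]
  ext y x
  simp only [Matrix.add_apply, Matrix.hadamard_apply]
  by_cases hyx : y = x
  · subst hyx
    have hsx : Real.sqrt (π y) ≠ 0 := by have := hπpos y; positivity
    have hQd : Q y y = P y y := by
      rw [hQyx, mul_comm, ← mul_assoc, mul_comm (Real.sqrt (π y)), inv_mul_cancel₀ hsx,
        one_mul]
    have hGd : G y y = 1 := by rw [hG]; simp
    have hRd : R y y = 1 - ∑ k, w k * A (σ k y) y := by
      rw [hRyx]
      have h3 : ∀ k : Fin κ, w k * ((1 - A (σ k y) y)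
          * if (σ k) y = (σ k) y then (1:ℝ) else 0) = w k - w k * A (σ k y) y := by
        intro k; simp; ring
      rw [Finset.sum_congr rfl fun k _ => h3 k, Finset.sum_sub_distrib, hw_sum]
    have hswap : ∑ k, w k * A (σ k y) y = ∑ z, A z y * S z y := by
      have : ∀ z : Ω, A z y * S z y
          = ∑ k, A z y * (w k * if z = σ k y then (1:ℝ) else 0) := by
        intro z
        rw [hSyx, Finset.mul_sum]
      simp_rw [this]
      rw [Finset.sum_comm]
      refine Finset.sum_congr rfl fun k _ => ?_
      rw [Finset.sum_eq_single (σ k y)]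
      · simp [mul_comm]
      · intro z _ hz; simp [hz]
      · simp
    have hsplit : ∑ z, A z y * S z y
        = A y y * S y y + ∑ z ∈ Finset.univ \ {y}, A z y * S z y := by
      rw [Finset.sdiff_singleton_eq_erase]
      exact (Finset.add_sum_erase _ _ (Finset.mem_univ y)).symm
    rw [hQd, hP_diag, hGd, hRd, one_mul, hA_diag]
    have := hsplit
    rw [hA_diag, one_mul] at this
    rw [hswap, this]
    ring
  · have hRo : R y x = 0 := by
      rw [hRyx]
      refine Finset.sum_eq_zero fun k _ => ?_
      have : σ k y ≠ σ k x := fun h => hyx ((σ k).injective h)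
      simp [this]
    rw [hQyx, hP_off y x hyx, hRo, add_zero, mul_comm ((Real.sqrt (π y))⁻¹),
      mul_assoc, hratio]
    ring
end

section
/- Let E : Ω → {0,…,B−1} be an energy function and let L ∈ ℂ^{Ω×Ω} be energy-dependent, meaning L_{yx} = g(E_y, E_x) for some function g : {0,…,B−1} × {0,…,B−1} → ℂ, with compressed matrix L̂ ∈ ℂ^{B×B} defined by L̂_{E',E} = g(E',E). Let M ∈ ℂ^{Ω×Ω} be arbitrary, and let T_E : ℂ^Ω → ℂ^B ⊗ ℂ^Ω be the 'energy' isometry defined by T_E|x⟩ = |E_x⟩ ⊗ |x⟩. Then T_E† (L̂ ⊗ M) T_E = L ⊙ M. -/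
open Matrix BigOperators Kronecker

/-- For an energy-dependent matrix `L` (with `L_{yx} = g(E_y, E_x)`),
its compressed matrix `L̂`, an arbitrary matrix `M`, and the energy isometry
`T_E|x⟩ = |E_x⟩ ⊗ |x⟩`, one has `T_E† (L̂ ⊗ M) T_E = L ⊙ M`. -/
theorem stmt_7 {Ω : Type*} [Fintype Ω] [DecidableEq Ω] (B : ℕ)
    (E : Ω → Fin B) (g : Fin B → Fin B → ℂ)
    (L : Matrix Ω Ω ℂ) (hL : ∀ y x, L y x = g (E y) (E x))
    (Lhat : Matrix (Fin B) (Fin B) ℂ) (hLhat : ∀ e' e, Lhat e' e = g e' e)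
    (M : Matrix Ω Ω ℂ)
    (TE : Matrix (Fin B × Ω) Ω ℂ)
    (hTE : ∀ e u x, TE (e, u) x = if e = E x ∧ u = x then 1 else 0) :
    TEᴴ * (Lhat ⊗ₖ M) * TE = Matrix.hadamard L M := by
  ext y x
  simp only [mul_apply, conjTranspose_apply, hadamard_apply, kroneckerMap_apply,
    Fintype.sum_prod_type]
  rw [Finset.sum_comm]
  have : ∀ p : Fin B × Ω, TE p y = if p = (E y, y) then 1 else 0 := by
    rintro ⟨e, u⟩
    rw [hTE]
    simp [Prod.ext_iff]
  simp only [this, hTE]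
  simp [ite_and, apply_ite (starRingEnd ℂ), ite_mul, Finset.sum_ite_eq', hL, hLhat]
end

section
/- Let β > 0, E : Ω → {0,…,B−1} an energy function, π the Gibbs distribution π_x = e^{-βE_x}/Z_β, f : ℝ → (0,1] with f(x) = e^{-βx} f(−x), a_{yx} = f(E_y − E_x), S = Σ_{k=1}^κ w_k Π_k a symmetric stochastic convex combination of permutation matrices, and P the propose-accept/reject transition matrix (p_{yx} = a_{yx} s_{yx} for y ≠ x, p_{xx} = 1 − Σ_{y≠x} a_{yx} s_{yx}). Let Q = D^{-1/2} P D^{1/2} with D = diag(π_x), let T_E : ℂ^Ω → ℂ^B ⊗ ℂ^Ω be the energy isometry T_E|x⟩ = |E_x⟩ ⊗ |x⟩, and define compressed B×B matrices Ĝ⊙A with entries e^{β(E'−E)/2} f(E'−E) and Ĵ−A with entries 1 − f(E'−E) (for E', E ∈ {0,…,B−1}). Then Q = T_E† ((Ĝ⊙A) ⊗ S) T_E + Σ_{k=1}^κ w_k Π_k^T T_E† ((Ĵ−A) ⊗ Π_k) T_E. -/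
open Matrix BigOperators Kronecker

/-- Ancilla-efficient decomposition of the discriminant matrix of a
propose-accept/reject Markov chain with Gibbs stationary distribution:
`Q = T_E† ((Ĝ⊙A) ⊗ S) T_E + Σ_k w_k Π_kᵀ T_E† ((Ĵ−A) ⊗ Π_k) T_E`,
where `T_E|x⟩ = |E_x⟩ ⊗ |x⟩` is the energy isometry, `Ĝ⊙A` has entries
`e^{β(E'−E)/2} f(E'−E)` and `Ĵ−A` has entries `1 − f(E'−E)`. -/
theorem stmt_10 {Ω : Type*} [Fintype Ω] [DecidableEq Ω] (B : ℕ)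
    (E : Ω → Fin B) (β : ℝ) (hβ : 0 < β)
    (Z : ℝ) (hZ : Z = ∑ x, Real.exp (-β * (E x : ℝ)))
    (π : Ω → ℝ) (hπ : ∀ x, π x = Real.exp (-β * (E x : ℝ)) / Z)
    (f : ℝ → ℝ) (hf_mem : ∀ t, f t ∈ Set.Ioc (0:ℝ) 1)
    (hf_eq : ∀ t, f t = Real.exp (-β * t) * f (-t))
    (a : Ω → Ω → ℝ) (ha : ∀ y x, a y x = f ((E y : ℝ) - (E x : ℝ)))
    (κ : ℕ) (w : Fin κ → ℝ) (σ : Fin κ → Equiv.Perm Ω)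
    (hw_nonneg : ∀ k, 0 ≤ w k) (hw_sum : ∑ k, w k = 1)
    (Pm : Fin κ → Matrix Ω Ω ℝ)
    (hPm : ∀ k v u, Pm k v u = if v = σ k u then 1 else 0)
    (S : Matrix Ω Ω ℝ) (hS : S = ∑ k, w k • Pm k)
    (P : Matrix Ω Ω ℝ)
    (hP_off : ∀ y x, y ≠ x → P y x = a y x * S y x)
    (hP_diag : ∀ x, P x x = 1 - ∑ y ∈ Finset.univ \ {x}, a y x * S y x)
    (Q : Matrix Ω Ω ℝ)
    (hQ : Q = Matrix.diagonal (fun x => (Real.sqrt (π x))⁻¹) * P *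
      Matrix.diagonal (fun x => Real.sqrt (π x)))
    (TE : Matrix (Fin B × Ω) Ω ℝ)
    (hTE : ∀ e u x, TE (e, u) x = if e = E x ∧ u = x then 1 else 0)
    (GA : Matrix (Fin B) (Fin B) ℝ)
    (hGA : ∀ e' e, GA e' e = Real.exp (β * ((e' : ℝ) - (e : ℝ)) / 2) * f ((e' : ℝ) - (e : ℝ)))
    (JA : Matrix (Fin B) (Fin B) ℝ)
    (hJA : ∀ e' e, JA e' e = 1 - f ((e' : ℝ) - (e : ℝ))) :
    Q = TEᵀ * (GA ⊗ₖ S) * TE +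
      ∑ k, w k • ((Pm k)ᵀ * (TEᵀ * (JA ⊗ₖ Pm k) * TE)) := by

  have key : ∀ (M : Matrix (Fin B × Ω) (Fin B × Ω) ℝ) (y x : Ω),
      (TEᵀ * M * TE) y x = M (E y, y) (E x, x) := by
    intro M y x
    rw [Matrix.mul_apply, Finset.sum_eq_single ((E x, x) : Fin B × Ω)]
    · rw [Matrix.mul_apply, Finset.sum_eq_single ((E y, y) : Fin B × Ω)]
      · rw [Matrix.transpose_apply, hTE, hTE]; simp
      · rintro ⟨e, u⟩ _ hp
        rw [Matrix.transpose_apply, hTE, if_neg, zero_mul]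
        rintro ⟨h1, h2⟩; exact hp (by simp [h1, h2])
      · simp
    · rintro ⟨e, u⟩ _ hq
      rw [hTE, if_neg, mul_zero]
      rintro ⟨h1, h2⟩; exact hq (by simp [h1, h2])
    · simp
  have second : ∀ (k : Fin κ) (y x : Ω),
      ((Pm k)ᵀ * (TEᵀ * (JA ⊗ₖ Pm k) * TE)) y x
        = if y = x then JA (E (σ k x)) (E x) else 0 := by
    intro k y x
    rw [Matrix.mul_apply]
    simp only [Matrix.transpose_apply, key, Matrix.kroneckerMap_apply, hPm k _ y]
    simp only [ite_mul, one_mul, zero_mul, Finset.sum_ite_eq' Finset.univ (σ k y),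
      Finset.mem_univ, if_true]
    rw [hPm]
    by_cases h : y = x
    · subst h; simp
    · rw [if_neg (fun hc => h ((σ k).injective hc)), mul_zero, if_neg h]
  ext y x
  have : Nonempty Ω := ⟨x⟩
  have hZpos : 0 < Z := by
    rw [hZ]; exact Finset.sum_pos (fun i _ => Real.exp_pos _) Finset.univ_nonempty
  have hsq : ∀ u : Ω, Real.sqrt (π u) = Real.exp (-β * (E u : ℝ) / 2) / Real.sqrt Z := by
    intro u
    rw [hπ, Real.sqrt_div (Real.exp_nonneg _), Real.exp_half]
  have hsqZ : Real.sqrt Z ≠ 0 := ne_of_gt (Real.sqrt_pos.mpr hZpos)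
  have hfac : ∀ u : Ω, Real.sqrt (π u) ≠ 0 := by
    intro u
    rw [hsq]
    positivity
  have hexp : ∀ u v : Ω, (Real.sqrt (π u))⁻¹ * Real.sqrt (π v)
      = Real.exp (β * ((E u : ℝ) - (E v : ℝ)) / 2) := by
    intro u v
    rw [hsq, hsq, inv_div, div_mul_div_comm, mul_comm (Real.sqrt Z),
      mul_div_mul_right _ _ hsqZ, ← Real.exp_sub]
    congr 1
    ring
  have hQ' : Q y x = (Real.sqrt (π y))⁻¹ * P y x * Real.sqrt (π x) := by
    rw [hQ, Matrix.mul_apply]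
    simp [Matrix.mul_diagonal, Matrix.diagonal_apply, Finset.sum_ite_eq', mul_assoc]
  rw [Matrix.add_apply, Matrix.sum_apply, key]
  simp only [Matrix.smul_apply, smul_eq_mul, second, Matrix.kroneckerMap_apply]
  by_cases hyx : y = x
  · subst hyx
    simp only [eq_self_iff_true, if_true]
    rw [hQ', hP_diag]
    have hdiag : (Real.sqrt (π y))⁻¹ * (1 - ∑ z ∈ Finset.univ \ {y}, a z y * S z y) *
        Real.sqrt (π y) = 1 - ∑ z ∈ Finset.univ \ {y}, a z y * S z y := by
      rw [mul_comm, ← mul_assoc, mul_inv_cancel₀ (hfac y), one_mul]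
    rw [hdiag]
    have hsum : ∑ z, a z y * S z y = ∑ k, w k * f ((E (σ k y) : ℝ) - (E y : ℝ)) := by
      simp only [ha, hS, Matrix.sum_apply, Matrix.smul_apply, smul_eq_mul, hPm,
        Finset.mul_sum]
      rw [Finset.sum_comm]
      refine Finset.sum_congr rfl fun k _ => ?_
      simp only [mul_ite, mul_one, mul_zero, ite_mul, zero_mul]
      rw [Finset.sum_ite_eq' Finset.univ (σ k y)]
      simp [mul_comm]
    have hdiff : ∑ z ∈ Finset.univ \ {y}, a z y * S z y
        = (∑ z, a z y * S z y) - a y y * S y y := by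
      rw [Finset.sum_sdiff_eq_sub (Finset.subset_univ _), Finset.sum_singleton]
    have hayy : a y y = f 0 := by rw [ha, sub_self]
    have hGAyy : GA (E y) (E y) = f 0 := by rw [hGA, sub_self]; simp
    have hJAsum : ∑ k, w k * JA (E (σ k y)) (E y)
        = 1 - ∑ k, w k * f ((E (σ k y) : ℝ) - (E y : ℝ)) := by
      simp only [hJA, mul_sub, mul_one]
      rw [Finset.sum_sub_distrib, hw_sum]
    rw [hJAsum, hdiff, hsum, hayy, hGAyy]
    ring
  · simp only [if_neg hyx, mul_zero, Finset.sum_const_zero, add_zero]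
    rw [hQ', hP_off y x hyx, ha, hGA]
    calc (Real.sqrt (π y))⁻¹ * (f ((E y : ℝ) - (E x : ℝ)) * S y x) * Real.sqrt (π x)
        = ((Real.sqrt (π y))⁻¹ * Real.sqrt (π x)) *
            (f ((E y : ℝ) - (E x : ℝ)) * S y x) := by ring
      _ = Real.exp (β * ((E y : ℝ) - (E x : ℝ)) / 2) * f ((E y : ℝ) - (E x : ℝ)) * S y x := by
          rw [hexp]; ring
end

section
/- Let U be a unitary operator on a finite-dimensional complex inner product space H and let T : K → H be an isometry (T†T = I). Define W on ℂ² ⊗ H by W = |0⟩⟨1| ⊗ U + |1⟩⟨0| ⊗ U†, and define the isometry T₊ : K → ℂ² ⊗ H by T₊v = |+⟩ ⊗ (Tv), where |+⟩ = (|0⟩ + |1⟩)/√2. Then W is a reflection (both unitary and self-adjoint, so W² = I), and T₊† W T₊ = ½(T†UT + (T†UT)†); in particular, if Q = T†UT is hermitian, then T₊† W T₊ = Q. -/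
open Matrix BigOperators

/-- For a unitary `U` and an isometry `T`, the operator
`W = |0⟩⟨1| ⊗ U + |1⟩⟨0| ⊗ U†` is a reflection (unitary and self-adjoint), and with
the isometry `T₊ v = |+⟩ ⊗ (T v)` one has `T₊† W T₊ = ½(T†UT + (T†UT)†)`; in
particular `T₊† W T₊ = Q` whenever `Q = T†UT` is hermitian. -/
theorem stmt_11 {n m : Type*} [Fintype n] [Fintype m] [DecidableEq n] [DecidableEq m]
    (U : Matrix n n ℂ) (hU : U ∈ Matrix.unitaryGroup n ℂ)
    (T : Matrix n m ℂ) (hT : Tᴴ * T = 1)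
    (W : Matrix (Fin 2 × n) (Fin 2 × n) ℂ)
    (hW : ∀ b i c j, W (b, i) (c, j) =
      (if b = 0 ∧ c = 1 then U i j else 0) + (if b = 1 ∧ c = 0 then Uᴴ i j else 0))
    (Tplus : Matrix (Fin 2 × n) m ℂ)
    (hTplus : ∀ b i k, Tplus (b, i) k = (Real.sqrt 2 : ℂ)⁻¹ * T i k) :
    W ∈ Matrix.unitaryGroup (Fin 2 × n) ℂ ∧ Wᴴ = W ∧ W * W = 1 ∧
    Tplusᴴ * W * Tplus = (1/2 : ℂ) • (Tᴴ * U * T + (Tᴴ * U * T)ᴴ) ∧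
    ((Tᴴ * U * T)ᴴ = Tᴴ * U * T → Tplusᴴ * W * Tplus = Tᴴ * U * T) := by
  have h1 : Uᴴ * U = 1 := hU.1
  have h2 : U * Uᴴ = 1 := hU.2
  have h1' : ∀ i j, ∑ x, (starRingEnd ℂ) (U x i) * U x j = if i = j then 1 else 0 := by
    intro i j
    simpa [Matrix.mul_apply, Matrix.one_apply, Matrix.conjTranspose_apply] using
      congrFun (congrFun h1 i) j
  have h2' : ∀ i j, ∑ x, U i x * (starRingEnd ℂ) (U j x) = if i = j then 1 else 0 := by
    intro i j
    simpa [Matrix.mul_apply, Matrix.one_apply, Matrix.conjTranspose_apply] using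
      congrFun (congrFun h2 i) j
  have hWH : Wᴴ = W := by
    ext ⟨b, i⟩ ⟨c, j⟩
    fin_cases b <;> fin_cases c <;>
      simp [Matrix.conjTranspose_apply, hW]
  have hWW : W * W = 1 := by
    ext ⟨b, i⟩ ⟨c, j⟩
    rw [Matrix.mul_apply, Fintype.sum_prod_type]
    simp only [hW, Fin.sum_univ_two]
    fin_cases b <;> fin_cases c <;>
      simp [Matrix.one_apply, Prod.ext_iff, h1', h2']
  have hhalf : (Real.sqrt 2 : ℂ)⁻¹ * (Real.sqrt 2 : ℂ)⁻¹ = 1 / 2 := by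
    rw [← mul_inv, ← Complex.ofReal_mul, Real.mul_self_sqrt (by norm_num)]
    norm_num
  have hmain : Tplusᴴ * W * Tplus = (1/2 : ℂ) • (Tᴴ * U * T + (Tᴴ * U * T)ᴴ) := by
    ext k l
    rw [Matrix.mul_apply, Fintype.sum_prod_type]
    simp only [Matrix.mul_apply, Fintype.sum_prod_type, Fin.sum_univ_two,
      Matrix.conjTranspose_apply, hW, hTplus, Matrix.smul_apply, Matrix.add_apply]
    simp only [if_true, and_true, true_and]
    norm_num
    simp only [star_mul', star_sum, Finset.sum_mul, Finset.mul_sum, smul_eq_mul,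
      Complex.conj_ofReal, star_star, Finset.mul_sum]
    rw [Finset.sum_comm]
    rw [mul_add, add_comm (1 / 2 * _)]
    congr 1 <;>
    · rw [Finset.mul_sum]
      refine Finset.sum_congr rfl fun y _ => ?_
      rw [Finset.mul_sum]
      refine Finset.sum_congr rfl fun x _ => ?_
      rw [← hhalf]; ring
  refine ⟨⟨?_, ?_⟩, hWH, hWW, hmain, fun hherm => ?_⟩
  · show star W * W = 1; rw [Matrix.star_eq_conjTranspose, hWH, hWW]
  · show W * star W = 1; rw [Matrix.star_eq_conjTranspose, hWH, hWW]
  · rw [hmain, hherm]; module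
end

section
/- Let P = (p_{yx}) be a column-stochastic matrix on a finite set Ω with nonnegative entries, and let π be a probability distribution with π_x > 0 satisfying detailed balance p_{xy} π_y = p_{yx} π_x. For x ∈ Ω define |ψ_x⟩ = |x⟩ ⊗ Σ_y √(p_{yx}) |y⟩ ∈ ℂ^Ω ⊗ ℂ^Ω, let Π = Σ_x |ψ_x⟩⟨ψ_x|, let Swap be the swap operator on ℂ^Ω ⊗ ℂ^Ω, and define W(P) = Swap · (2Π − I). Then the vector |ψ_π⟩ = Σ_x √(π_x) |ψ_x⟩ = Σ_{x,y} √(π_x) √(p_{yx}) |x⟩ ⊗ |y⟩ satisfies W(P)|ψ_π⟩ = |ψ_π⟩, i.e. it is an eigenvector of Szegedy's walk operator with eigenvalue 1. -/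
open Matrix BigOperators

/-- For a reversible column-stochastic matrix `P` with stationary
distribution `π`, the vector `|ψ_π⟩ = Σ_{x,y} √(π_x) √(p_{yx}) |x⟩ ⊗ |y⟩` is a
1-eigenvector of Szegedy's walk operator `W(P) = Swap · (2Π − I)`. -/
theorem stmt_12 {Ω : Type*} [Fintype Ω] [DecidableEq Ω]
    (P : Matrix Ω Ω ℝ)
    (hP_nonneg : ∀ y x, 0 ≤ P y x) (hP_stoch : ∀ x, ∑ y, P y x = 1)
    (π : Ω → ℝ) (hπ_pos : ∀ x, 0 < π x) (hπ_sum : ∑ x, π x = 1)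
    (hdb : ∀ x y, P x y * π y = P y x * π x)
    (ψ : Ω → (Ω × Ω) → ℂ)
    (hψ : ∀ x u y, ψ x (u, y) = if u = x then (Real.sqrt (P y x) : ℂ) else 0)
    (Pi : Matrix (Ω × Ω) (Ω × Ω) ℂ)
    (hPi : Pi = ∑ x, Matrix.vecMulVec (ψ x) (star (ψ x)))
    (Swap : Matrix (Ω × Ω) (Ω × Ω) ℂ)
    (hSwap : ∀ p q, Swap p q = if p.1 = q.2 ∧ p.2 = q.1 then 1 else 0)
    (W : Matrix (Ω × Ω) (Ω × Ω) ℂ) (hW : W = Swap * (2 • Pi - 1))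
    (ψπ : (Ω × Ω) → ℂ)
    (hψπ : ∀ x y, ψπ (x, y) = (Real.sqrt (π x) : ℂ) * (Real.sqrt (P y x) : ℂ)) :
    W.mulVec ψπ = ψπ := by
  -- inner product of ψ x with ψπ equals √(π x)
  have hinner : ∀ x : Ω, ∑ q : Ω × Ω, star (ψ x q) * ψπ q = (Real.sqrt (π x) : ℂ) := by
    intro x
    rw [Fintype.sum_prod_type]
    rw [Finset.sum_eq_single x]
    · have : ∀ b : Ω, star (ψ x (x, b)) * ψπ (x, b)
          = (Real.sqrt (π x) : ℂ) * (P b x : ℝ) := by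
        intro b
        rw [hψ, hψπ, if_pos rfl]
        simp only [Complex.star_def, Complex.conj_ofReal, ← Complex.ofReal_mul]
        norm_cast
        rw [mul_comm, mul_assoc, Real.mul_self_sqrt (hP_nonneg b x)]
      simp only [this, ← Finset.mul_sum, ← Complex.ofReal_sum, hP_stoch x,
        Complex.ofReal_one, mul_one]
    · intro a _ ha
      have : ∀ b : Ω, (starRingEnd ℂ) (ψ x (a, b)) * ψπ (a, b) = 0 := by
        intro b; rw [hψ, if_neg ha]; simp
      simp [this]
    · intro h; exact absurd (Finset.mem_univ x) h
  -- Pi fixes ψπ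
  have hPimv : Pi.mulVec ψπ = ψπ := by
    funext p
    obtain ⟨u, y⟩ := p
    have expand : Pi.mulVec ψπ (u, y)
        = ∑ x : Ω, ψ x (u, y) * ∑ q : Ω × Ω, star (ψ x q) * ψπ q := by
      simp only [hPi, Matrix.mulVec, dotProduct, Matrix.sum_apply,
        Matrix.vecMulVec_apply, Pi.star_apply, Finset.sum_mul]
      rw [Finset.sum_comm]
      simp [Finset.mul_sum, mul_assoc]
    rw [expand]
    simp only [hinner]
    rw [Finset.sum_eq_single u]
    · rw [hψ, if_pos rfl, hψπ]; ring
    · intro a _ ha; rw [hψ, if_neg (Ne.symm ha)]; simp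
    · intro h; exact absurd (Finset.mem_univ u) h
  -- Swap fixes ψπ
  have hSwapmv : Swap.mulVec ψπ = ψπ := by
    funext p
    obtain ⟨u, y⟩ := p
    have : Swap.mulVec ψπ (u, y) = ψπ (y, u) := by
      simp only [Matrix.mulVec, dotProduct]
      rw [Finset.sum_eq_single ((y, u) : Ω × Ω)]
      · rw [hSwap]; simp
      · intro q _ hq
        rw [hSwap]
        have : ¬((u, y).1 = q.2 ∧ (u, y).2 = q.1) := by
          rintro ⟨h1, h2⟩
          exact hq (by cases q; simp_all)
        rw [if_neg this, zero_mul]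
      · intro h; exact absurd (Finset.mem_univ _) h
    rw [this, hψπ, hψπ, ← Complex.ofReal_mul, ← Complex.ofReal_mul,
      ← Real.sqrt_mul (le_of_lt (hπ_pos y)), ← Real.sqrt_mul (le_of_lt (hπ_pos u))]
    rw [mul_comm (π y), mul_comm (π u), hdb u y]
  rw [hW, ← Matrix.mulVec_mulVec]
  have : (2 • Pi - 1).mulVec ψπ = ψπ := by
    rw [Matrix.sub_mulVec, Matrix.smul_mulVec, hPimv, Matrix.one_mulVec]
    funext p; simp; ring
  rw [this, hSwapmv]
end

section
/- Let S = (s_{yx}) be a symmetric stochastic matrix on a finite set Ω and a_{yx} ∈ [0,1] acceptance probabilities with a_{xx} = 1. For x ∈ Ω define |ψ_x⟩ = |x⟩ ⊗ Σ_y √(s_{yx}) |y⟩ ⊗ (√(a_{yx}) |0⟩ + √(1 − a_{yx}) |1⟩) ∈ ℂ^Ω ⊗ ℂ^Ω ⊗ ℂ², the isometry T = Σ_x |ψ_x⟩⟨x|, and the controlled-swap operator R = Swap ⊗ |0⟩⟨0| + I ⊗ I ⊗ |1⟩⟨1| (Swap acting on the first two registers). Then T† R T = Q, where Q is the matrix with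 off-diagonal entries q_{xy} = √(a_{yx}) √(a_{xy}) s_{yx} for x ≠ y and diagonal entries q_{xx} = 1 − Σ_{y≠x} a_{yx} s_{yx}. -/
open Matrix BigOperators

/-- Szegedy quantization of a propose-accept/reject Markov chain:
with `|ψ_x⟩ = |x⟩ ⊗ Σ_y √(s_{yx})|y⟩ ⊗ (√(a_{yx})|0⟩ + √(1−a_{yx})|1⟩)`,
`T = Σ_x |ψ_x⟩⟨x|`, and the controlled swap `R = Swap ⊗ |0⟩⟨0| + I ⊗ I ⊗ |1⟩⟨1|`,
one has `T† R T = Q` with `q_{xy} = √(a_{yx}) √(a_{xy}) s_{yx}` off the diagonal and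
`q_{xx} = 1 − Σ_{y≠x} a_{yx} s_{yx}` on the diagonal. -/
theorem stmt_15 {Ω : Type*} [Fintype Ω] [DecidableEq Ω]
    (S : Matrix Ω Ω ℝ) (hS_nonneg : ∀ y x, 0 ≤ S y x)
    (hS_symm : Sᵀ = S) (hS_stoch : ∀ x, ∑ y, S y x = 1)
    (a : Ω → Ω → ℝ) (ha_mem : ∀ y x, a y x ∈ Set.Icc (0:ℝ) 1)
    (ha_diag : ∀ x, a x x = 1)
    (T : Matrix (Ω × Ω × Fin 2) Ω ℂ)
    (hT : ∀ u y (b : Fin 2) x, T (u, y, b) x =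
      (if u = x then (Real.sqrt (S y x) : ℂ) else 0) *
      (if b = 0 then (Real.sqrt (a y x) : ℂ) else (Real.sqrt (1 - a y x) : ℂ)))
    (R : Matrix (Ω × Ω × Fin 2) (Ω × Ω × Fin 2) ℂ)
    (hR : ∀ p q, R p q =
      if p.2.2 = 0 ∧ q.2.2 = 0 then (if p.1 = q.2.1 ∧ p.2.1 = q.1 then 1 else 0)
      else if p.2.2 = 1 ∧ q.2.2 = 1 then (if p.1 = q.1 ∧ p.2.1 = q.2.1 then 1 else 0)
      else 0)
    (Q : Matrix Ω Ω ℂ)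
    (hQ_off : ∀ x y, x ≠ y →
      Q x y = (Real.sqrt (a y x) : ℂ) * (Real.sqrt (a x y) : ℂ) * (S y x : ℂ))
    (hQ_diag : ∀ x, Q x x = 1 - ((∑ y ∈ Finset.univ \ {x}, a y x * S y x : ℝ) : ℂ)) :
    Tᴴ * R * T = Q := by
  ext x y
  have key : ∀ q, (∑ p, (starRingEnd ℂ) (T p x) * R p q) =
      (if q.2.2 = 0 then
        (if q.2.1 = x then ((Real.sqrt (S q.1 x) * Real.sqrt (a q.1 x) : ℝ) : ℂ) else 0)
      else
        (if q.1 = x then ((Real.sqrt (S q.2.1 x) * Real.sqrt (1 - a q.2.1 x) : ℝ) : ℂ) else 0)) := by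
    rintro ⟨u, v, b⟩
    fin_cases b
    · rw [Fintype.sum_prod_type]
      simp [Fintype.sum_prod_type, Fin.sum_univ_two, hT, hR, Finset.sum_ite_eq,
        Finset.sum_ite_eq', mul_comm]
      simp [ite_and, Finset.sum_ite_eq', apply_ite, _root_.map_mul, Complex.conj_ofReal]
      split_ifs <;> tauto
    · rw [Fintype.sum_prod_type]
      simp [Fintype.sum_prod_type, Fin.sum_univ_two, hT, hR, Finset.sum_ite_eq,
        Finset.sum_ite_eq', mul_comm]
      simp [ite_and, Finset.sum_ite_eq', apply_ite, _root_.map_mul, Complex.conj_ofReal]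
      split_ifs <;> tauto
  have hSsym : ∀ u v : Ω, S u v = S v u := fun u v => by
    conv_lhs => rw [← hS_symm, Matrix.transpose_apply]
  have entry : (Tᴴ * R * T) x y = ∑ q, (∑ p, (starRingEnd ℂ) (T p x) * R p q) * T q y := by
    simp [Matrix.mul_apply, Matrix.conjTranspose_apply]
  rw [entry]
  simp only [key]
  rw [Fintype.sum_prod_type]
  simp only [Fintype.sum_prod_type, Fin.sum_univ_two, hT]
  simp only [if_true, one_ne_zero, if_false, ite_mul, mul_ite, mul_zero, zero_mul,
    Finset.sum_add_distrib, Finset.sum_ite_eq', Finset.mem_univ]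
  rcases eq_or_ne x y with rfl | hxy
  · rw [hQ_diag]
    simp [Finset.sum_ite_eq']
    norm_cast
    have h1 : ∀ v, √(S v x) * √(1 - a v x) * (√(S v x) * √(1 - a v x)) = S v x * (1 - a v x) :=
      fun v => by
        rw [mul_mul_mul_comm, Real.mul_self_sqrt (hS_nonneg v x),
          Real.mul_self_sqrt (by linarith [(ha_mem v x).2])]
    have h2 : √(S x x) * √(a x x) * (√(S x x) * √(a x x)) = S x x * a x x := by
      rw [mul_mul_mul_comm, Real.mul_self_sqrt (hS_nonneg x x),
        Real.mul_self_sqrt (ha_mem x x).1]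
    simp only [h1, h2, mul_sub, mul_one]
    rw [Finset.sum_sub_distrib, hS_stoch x, ha_diag x]
    have : ∀ v, S v x * a v x = a v x * S v x := fun v => mul_comm _ _
    simp only [this]
    ring
  · rw [hQ_off x y hxy]
    simp [Finset.sum_ite_eq', hxy.symm]
    rw [hSsym x y]
    norm_cast
    linear_combination (√(a y x) * √(a x y)) * Real.mul_self_sqrt (hS_nonneg y x)
end

section
/- Let U = (φ_{yx}) be a symmetric unitary matrix on a finite set Ω (φ_{yx} = φ_{xy}) and set s_{yx} = |φ_{yx}|². Let a_{yx} ∈ [0,1] with a_{xx} = 1. For x ∈ Ω define |ψ_x⟩ = |x⟩ ⊗ Σ_y φ_{yx} |y⟩ ⊗ (√(a_{yx}) |0⟩ + √(1 − a_{yx}) |1⟩) ∈ ℂ^Ω ⊗ ℂ^Ω ⊗ ℂ², the isometry T = Σ_x |ψ_x⟩⟨x|, and R = Swap ⊗ |0⟩⟨0| + I ⊗ I ⊗ |1⟩⟨1|. Then T† R T = Q, where Q has off-diagonal entries q_{xy} = √(a_{yx}) √(a_{xy}) s_{yx} for x ≠ y and diagonal entries q_{xx} = 1 − Σ_{y≠x}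 a_{yx} s_{yx}. -/
open Matrix BigOperators

/-- Szegedy quantization of a quantum-enhanced propose-accept/reject
Markov chain with symmetric unitary proposal `U = (φ_{yx})`, `s_{yx} = |φ_{yx}|²`:
with `|ψ_x⟩ = |x⟩ ⊗ Σ_y φ_{yx}|y⟩ ⊗ (√(a_{yx})|0⟩ + √(1−a_{yx})|1⟩)` and the
controlled swap `R`, one has `T† R T = Q` with `q_{xy} = √(a_{yx}) √(a_{xy}) s_{yx}`
off the diagonal and `q_{xx} = 1 − Σ_{y≠x} a_{yx} s_{yx}` on the diagonal. -/
theorem stmt_16 {Ω : Type*} [Fintype Ω] [DecidableEq Ω]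
    (φ : Matrix Ω Ω ℂ) (hφ_unitary : φ ∈ Matrix.unitaryGroup Ω ℂ) (hφ_symm : φᵀ = φ)
    (s : Ω → Ω → ℝ) (hs : ∀ y x, s y x = ‖φ y x‖ ^ 2)
    (a : Ω → Ω → ℝ) (ha_mem : ∀ y x, a y x ∈ Set.Icc (0:ℝ) 1)
    (ha_diag : ∀ x, a x x = 1)
    (T : Matrix (Ω × Ω × Fin 2) Ω ℂ)
    (hT : ∀ u y (b : Fin 2) x, T (u, y, b) x =
      (if u = x then φ y x else 0) *
      (if b = 0 then (Real.sqrt (a y x) : ℂ) else (Real.sqrt (1 - a y x) : ℂ)))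
    (R : Matrix (Ω × Ω × Fin 2) (Ω × Ω × Fin 2) ℂ)
    (hR : ∀ p q, R p q =
      if p.2.2 = 0 ∧ q.2.2 = 0 then (if p.1 = q.2.1 ∧ p.2.1 = q.1 then 1 else 0)
      else if p.2.2 = 1 ∧ q.2.2 = 1 then (if p.1 = q.1 ∧ p.2.1 = q.2.1 then 1 else 0)
      else 0)
    (Q : Matrix Ω Ω ℂ)
    (hQ_off : ∀ x y, x ≠ y →
      Q x y = (Real.sqrt (a y x) : ℂ) * (Real.sqrt (a x y) : ℂ) * (s y x : ℂ))
    (hQ_diag : ∀ x, Q x x = 1 - ((∑ y ∈ Finset.univ \ {x}, a y x * s y x : ℝ) : ℂ)) :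
    Tᴴ * R * T = Q := by
  ext x y
  simp only [Matrix.mul_apply, Matrix.conjTranspose_apply, Finset.sum_mul]
  simp only [hR, hT, Fintype.sum_prod_type, Fin.sum_univ_two]
  simp only [Fin.isValue, zero_ne_one, one_ne_zero, and_true, and_false, false_and, true_and,
    if_true, if_false, ite_mul, mul_ite, zero_mul, mul_zero, apply_ite (starRingEnd ℂ), map_zero, _root_.map_mul,
    Finset.sum_ite_eq, Finset.sum_ite_eq', Finset.mem_univ, if_pos, Finset.sum_const_zero,
    add_zero, zero_add, one_mul, mul_one]
  simp only [apply_ite (star : ℂ → ℂ), star_zero, star_mul', ite_and,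
    Finset.sum_ite_eq', Finset.sum_ite_eq, Finset.mem_univ, if_true, add_zero, zero_add,
    Finset.sum_const_zero, mul_ite, ite_mul, zero_mul, mul_zero]
  simp only [Finset.sum_ite_irrel, Finset.sum_const_zero, ite_self,
    Finset.sum_ite_eq', Finset.sum_ite_eq, Finset.mem_univ, if_true, add_zero, zero_add]
  simp only [Finset.sum_add_distrib, Finset.sum_ite_irrel, Finset.sum_const_zero,
    Finset.sum_ite_eq', Finset.mem_univ, if_true]
  have hsymm : ∀ u v, φ u v = φ v u := by
    intro u v; conv_lhs => rw [← hφ_symm, Matrix.transpose_apply]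
  have hmul : ∀ u v, star (φ u v) * φ u v = ((s u v : ℝ) : ℂ) := by
    intro u v
    rw [hs, Complex.sq_norm, Complex.normSq_eq_conj_mul_self, Complex.star_def]
  simp only [Complex.star_def, Complex.conj_ofReal]
  simp only [← Complex.star_def]
  by_cases hxy : y = x
  · subst hxy
    rw [if_pos rfl, hQ_diag]
    have hcolC : ∑ v, star (φ v y) * φ v y = 1 := by
      have h := Matrix.mem_unitaryGroup_iff'.mp hφ_unitary
      have h2 := congrFun (congrFun h y) y
      simpa [Matrix.mul_apply, Matrix.star_apply] using h2
    have hsum : ∑ v, s v y = 1 := by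
      simp only [hmul] at hcolC
      exact_mod_cast hcolC
    have hterm : ∀ v, star (φ v y) * (↑(Real.sqrt (1 - a v y)) : ℂ) *
        (φ v y * (↑(Real.sqrt (1 - a v y)) : ℂ)) = ((s v y * (1 - a v y) : ℝ) : ℂ) := by
      intro v
      have hc : (0:ℝ) ≤ 1 - a v y := by linarith [(ha_mem v y).2]
      calc star (φ v y) * (↑(Real.sqrt (1 - a v y)) : ℂ) *
            (φ v y * (↑(Real.sqrt (1 - a v y)) : ℂ))
          = (star (φ v y) * φ v y) *
            ((↑(Real.sqrt (1 - a v y)) : ℂ) * (↑(Real.sqrt (1 - a v y)) : ℂ)) := by ring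
        _ = ((s v y : ℝ) : ℂ) * ((Real.sqrt (1 - a v y) * Real.sqrt (1 - a v y) : ℝ) : ℂ) := by
            rw [hmul]; push_cast; ring
        _ = ((s v y * (1 - a v y) : ℝ) : ℂ) := by
            rw [Real.mul_self_sqrt hc]; push_cast; ring
    have hterm0 : star (φ y y) * (↑(Real.sqrt (a y y)) : ℂ) *
        (φ y y * (↑(Real.sqrt (a y y)) : ℂ)) = ((s y y : ℝ) : ℂ) := by
      rw [ha_diag, Real.sqrt_one]
      push_cast
      rw [mul_one, mul_one, hmul]
    rw [hterm0]
    rw [Finset.sum_congr rfl (fun v _ => hterm v)]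
    have key : s y y + ∑ v, s v y * (1 - a v y)
        = 1 - ∑ v ∈ Finset.univ \ {y}, a v y * s v y := by
      have hsplit : ∑ v, a v y * s v y
          = s y y + ∑ v ∈ Finset.univ \ {y}, a v y * s v y := by
        rw [Finset.sdiff_singleton_eq_erase,
          ← Finset.add_sum_erase _ _ (Finset.mem_univ y), ha_diag, one_mul]
      have h2 : ∑ v, s v y * (1 - a v y) = (∑ v, s v y) - ∑ v, a v y * s v y := by
        rw [← Finset.sum_sub_distrib]
        exact Finset.sum_congr rfl (fun v _ => by ring)
      rw [h2, hsum, hsplit]; ring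
    calc ((s y y : ℝ) : ℂ) + ∑ v, ((s v y * (1 - a v y) : ℝ) : ℂ)
        = ((s y y + ∑ v, s v y * (1 - a v y) : ℝ) : ℂ) := by push_cast; ring
      _ = 1 - ((∑ v ∈ Finset.univ \ {y}, a v y * s v y : ℝ) : ℂ) := by
          rw [key]; push_cast; ring
  · rw [if_neg hxy, add_zero, hQ_off x y (fun h => hxy h.symm)]
    rw [hsymm x y]
    linear_combination ((Real.sqrt (a y x) : ℂ) * (Real.sqrt (a x y) : ℂ)) * hmul y x
end

section
/- Let Q be an N×N hermitian complex matrix all of whose eigenvalues lie in the half-open interval (−1, 1]. Then there exist an isometry T : ℂ^N → ℂ^N ⊗ ℂ² (i.e. T†T = I) and a reflection S on ℂ^N ⊗ ℂ² (a self-adjoint unitary; one may take S = I ⊗ Z with Z = diag(1,−1)) such that T† S T = Q. -/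
open Matrix BigOperators

/-- Any hermitian matrix `Q` with all eigenvalues in `(−1, 1]` can be
written as `Q = T† S T` for an isometry `T : ℂ^N → ℂ^N ⊗ ℂ²` and a reflection `S`
(a self-adjoint unitary) on `ℂ^N ⊗ ℂ²`. -/
theorem stmt_17 (N : ℕ) (Q : Matrix (Fin N) (Fin N) ℂ)
    (hQ : Q.IsHermitian)
    (heig : ∀ i, hQ.eigenvalues i ∈ Set.Ioc (-1 : ℝ) 1) :
    ∃ (T : Matrix (Fin N × Fin 2) (Fin N) ℂ)
      (S : Matrix (Fin N × Fin 2) (Fin N × Fin 2) ℂ),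
      Tᴴ * T = 1 ∧ Sᴴ = S ∧ S ∈ Matrix.unitaryGroup (Fin N × Fin 2) ℂ ∧
      Tᴴ * S * T = Q := by
  classical
  set U : Matrix (Fin N) (Fin N) ℂ := (hQ.eigenvectorUnitary : Matrix (Fin N) (Fin N) ℂ) with hU
  have hUU : U * star U = 1 := (Matrix.mem_unitaryGroup_iff).mp hQ.eigenvectorUnitary.2
  have hUU' : star U * U = 1 := (Matrix.mem_unitaryGroup_iff').mp hQ.eigenvectorUnitary.2
  set d : Fin N → ℝ := hQ.eigenvalues with hd
  have conjmul : ∀ c e : Fin N → ℂ,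
      (U * diagonal c * star U) * (U * diagonal e * star U)
        = U * diagonal (fun i => c i * e i) * star U := by
    intro c e
    calc (U * diagonal c * star U) * (U * diagonal e * star U)
        = U * (diagonal c * (star U * U) * diagonal e) * star U := by
          simp only [Matrix.mul_assoc]
      _ = U * diagonal (fun i => c i * e i) * star U := by
          rw [hUU', Matrix.mul_one, diagonal_mul_diagonal]

  have conjadd : ∀ c e : Fin N → ℂ,
      (U * diagonal c * star U) + (U * diagonal e * star U)
        = U * diagonal (fun i => c i + e i) * star U := by
    intro c e
    rw [Matrix.mul_assoc U, Matrix.mul_assoc U, ← Matrix.mul_add, ← Matrix.add_mul,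
      diagonal_add, ← Matrix.mul_assoc]
  have conjsub : ∀ c e : Fin N → ℂ,
      (U * diagonal c * star U) - (U * diagonal e * star U)
        = U * diagonal (fun i => c i - e i) * star U := by
    intro c e
    rw [Matrix.mul_assoc U, Matrix.mul_assoc U, ← Matrix.mul_sub, ← Matrix.sub_mul,
      diagonal_sub, ← Matrix.mul_assoc]
  set a : Fin N → ℝ := fun i => Real.sqrt ((1 + d i) / 2) with ha
  set b : Fin N → ℝ := fun i => Real.sqrt ((1 - d i) / 2) with hb
  have ha2 : ∀ i, (a i : ℝ) * a i = (1 + d i) / 2 := by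
    intro i
    exact Real.mul_self_sqrt (by have := (heig i).1; linarith)
  have hb2 : ∀ i, (b i : ℝ) * b i = (1 - d i) / 2 := by
    intro i
    exact Real.mul_self_sqrt (by have := (heig i).2; linarith)
  set A : Matrix (Fin N) (Fin N) ℂ := U * diagonal (fun i => (a i : ℂ)) * star U with hA
  set B : Matrix (Fin N) (Fin N) ℂ := U * diagonal (fun i => (b i : ℂ)) * star U with hB
  have hastar : star (fun i => ((a i : ℂ))) = fun i => ((a i : ℂ)) := by
    funext i; simp [Pi.star_def, Complex.conj_ofReal]
  have hbstar : star (fun i => ((b i : ℂ))) = fun i => ((b i : ℂ)) := by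
    funext i; simp [Pi.star_def, Complex.conj_ofReal]
  have hAherm : Aᴴ = A := by
    simp [hA, conjTranspose_mul, diagonal_conjTranspose, star_eq_conjTranspose,
      conjTranspose_conjTranspose, Matrix.mul_assoc, hastar]
  have hBherm : Bᴴ = B := by
    simp [hB, conjTranspose_mul, diagonal_conjTranspose, star_eq_conjTranspose,
      conjTranspose_conjTranspose, Matrix.mul_assoc, hbstar]
  have hAAplusBB : A * A + B * B = 1 := by
    rw [hA, hB, conjmul, conjmul, conjadd]
    have hfun : (fun i => (a i : ℂ) * a i + (b i : ℂ) * b i) = fun _ => (1 : ℂ) := by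
      funext i
      push_cast [← Complex.ofReal_mul, ha2 i, hb2 i]
      ring
    rw [hfun, diagonal_one, Matrix.mul_one, hUU]
  have hAAminusBB : A * A - B * B = Q := by
    rw [hA, hB, conjmul, conjmul, conjsub]
    have hfun : (fun i => (a i : ℂ) * a i - (b i : ℂ) * b i) = fun i => (d i : ℂ) := by
      funext i
      push_cast [← Complex.ofReal_mul, ha2 i, hb2 i]
      ring
    rw [hfun]
    exact (hQ.spectral_theorem).symm
  set T : Matrix (Fin N × Fin 2) (Fin N) ℂ :=
    Matrix.of (fun p k => if p.2 = 0 then A p.1 k else B p.1 k) with hT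
  set s : Fin N × Fin 2 → ℂ := fun p => if p.2 = 0 then 1 else -1 with hs
  have hsstar : star s = s := by
    funext p; by_cases h : p.2 = 0 <;> simp [hs, h, Pi.star_def]
  refine ⟨T, diagonal s, ?_, ?_, ?_, ?_⟩
  · have key : Tᴴ * T = Aᴴ * A + Bᴴ * B := by
      ext k l
      simp only [Matrix.mul_apply, conjTranspose_apply, Matrix.of_apply, hT,
        Matrix.add_apply]
      rw [Fintype.sum_prod_type, ← Finset.sum_add_distrib]
      refine Finset.sum_congr rfl fun i _ => ?_
      rw [Fin.sum_univ_two]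
      norm_num
    rw [key, hAherm, hBherm, hAAplusBB]
  · rw [diagonal_conjTranspose, hsstar]
  · rw [Matrix.mem_unitaryGroup_iff', star_eq_conjTranspose, diagonal_conjTranspose,
      hsstar, diagonal_mul_diagonal]
    have : (fun i => s i * s i) = fun _ => (1 : ℂ) := by
      funext p; by_cases h : p.2 = 0 <;> simp [hs, h]
    rw [this, diagonal_one]
  · have hST : diagonal s * T = Matrix.of (fun p k => s p * T p k) := by
      ext p k
      rw [Matrix.of_apply, diagonal_mul]
    have key : Tᴴ * (diagonal s * T) = Aᴴ * A - Bᴴ * B := by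
      rw [hST]
      ext k l
      simp only [Matrix.mul_apply, conjTranspose_apply, Matrix.of_apply, hT,
        Matrix.sub_apply, hs]
      rw [Fintype.sum_prod_type, ← Finset.sum_sub_distrib]
      refine Finset.sum_congr rfl fun i _ => ?_
      rw [Fin.sum_univ_two]
      norm_num
      ring
    rw [Matrix.mul_assoc, key, hAherm, hBherm, hAAminusBB]
end

section
/- Let T : ℂ^N → ℂ^M be an isometry (T†T = I), S a reflection on ℂ^M (self-adjoint unitary), Q = T†ST, Π = TT†, and U = S(2Π − I). Suppose φ ∈ ℂ^N is a unit eigenvector of Q with eigenvalue λ ∈ (−1, 1), and set χ = Tφ and μ^± = λ ± i√(1−λ²) = e^{±i arccos(λ)}. Then the vectors ψ^± = χ − μ^± Sχ satisfy U ψ^± = μ^± ψ^±, i.e. they are eigenvectors of the walk operator U with eigenvalues e^{±i arccos(λ)}. -/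
open Matrix BigOperators

/-- For an isometry `T`, a reflection `S`, `Q = T†ST`, `Π = TT†`,
and `U = S(2Π − I)`, if `φ` is a unit eigenvector of `Q` with eigenvalue
`λ ∈ (−1,1)`, `χ = Tφ`, and `μ^± = λ ± i√(1−λ²) = e^{±i arccos λ}`, then the
vectors `ψ^± = χ − μ^± Sχ` satisfy `U ψ^± = μ^± ψ^±`. -/
theorem stmt_18 {M N : Type*} [Fintype M] [Fintype N] [DecidableEq M] [DecidableEq N]
    (T : Matrix M N ℂ) (hT : Tᴴ * T = 1)
    (S : Matrix M M ℂ) (hS_sa : Sᴴ = S) (hS_inv : S * S = 1)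
    (Q : Matrix N N ℂ) (hQ : Q = Tᴴ * S * T)
    (U : Matrix M M ℂ) (hU : U = S * (2 • (T * Tᴴ) - 1))
    (φ : N → ℂ) (hφ_unit : dotProduct (star φ) φ = 1)
    (lam : ℝ) (hlam : lam ∈ Set.Ioo (-1 : ℝ) 1)
    (heig : Q.mulVec φ = (lam : ℂ) • φ)
    (μp μm : ℂ)
    (hμp : μp = (lam : ℂ) + Complex.I * (Real.sqrt (1 - lam ^ 2) : ℂ))
    (hμm : μm = (lam : ℂ) - Complex.I * (Real.sqrt (1 - lam ^ 2) : ℂ))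
    (χ : M → ℂ) (hχ : χ = T.mulVec φ) :
    U.mulVec (χ - μp • S.mulVec χ) = μp • (χ - μp • S.mulVec χ) ∧
    U.mulVec (χ - μm • S.mulVec χ) = μm • (χ - μm • S.mulVec χ) ∧
    μp = Complex.exp (Complex.I * (Real.arccos lam : ℂ)) ∧
    μm = Complex.exp (-(Complex.I * (Real.arccos lam : ℂ))) := by
  obtain ⟨hl1, hl2⟩ := hlam
  set s : ℝ := Real.sqrt (1 - lam ^ 2) with hs
  have hsq : ((s : ℝ) : ℂ) ^ 2 = 1 - (lam : ℂ) ^ 2 := by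
    rw [← Complex.ofReal_pow, hs, Real.sq_sqrt (by nlinarith)]
    push_cast; ring
  -- quadratic relation
  have hquadp : μp ^ 2 = 2 * (lam : ℂ) * μp - 1 := by
    rw [hμp]
    linear_combination ((s : ℂ)) ^ 2 * Complex.I_sq - hsq
  have hquadm : μm ^ 2 = 2 * (lam : ℂ) * μm - 1 := by
    rw [hμm]
    linear_combination ((s : ℂ)) ^ 2 * Complex.I_sq - hsq
  -- projector facts
  have hPχ : (T * Tᴴ).mulVec χ = χ := by
    rw [hχ, mulVec_mulVec, Matrix.mul_assoc, hT, Matrix.mul_one]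
  have hPSχ : (T * Tᴴ).mulVec (S.mulVec χ) = (lam : ℂ) • χ := by
    have h1 : T * Tᴴ * S * T = T * Q := by
      rw [hQ]; simp only [Matrix.mul_assoc]
    rw [hχ, mulVec_mulVec, mulVec_mulVec, h1, ← mulVec_mulVec, heig,
      mulVec_smul]
  have hSSχ : S.mulVec (S.mulVec χ) = χ := by
    rw [mulVec_mulVec, hS_inv, one_mulVec]
  have key : ∀ μ : ℂ, μ ^ 2 = 2 * (lam : ℂ) * μ - 1 →
      U.mulVec (χ - μ • S.mulVec χ) = μ • (χ - μ • S.mulVec χ) := by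
    intro μ hμ
    rw [hU, ← mulVec_mulVec]
    have h2 : (2 • (T * Tᴴ) - 1).mulVec (χ - μ • S.mulVec χ)
        = (1 - 2 * (lam : ℂ) * μ) • χ + μ • S.mulVec χ := by
      rw [sub_mulVec, one_mulVec, smul_mulVec, mulVec_sub, mulVec_smul,
        hPχ, hPSχ]
      ext i
      simp only [Pi.add_apply, Pi.sub_apply, Pi.smul_apply, smul_eq_mul,
        smul_sub, two_smul]
      ring
    rw [h2, mulVec_add, mulVec_smul, mulVec_smul, hSSχ]
    ext i
    simp only [Pi.add_apply, Pi.sub_apply, Pi.smul_apply, smul_eq_mul]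
    linear_combination (S.mulVec χ i) * hμ
  have hcs : ((Real.cos (Real.arccos lam) : ℝ) : ℂ) = (lam : ℂ) := by
    rw [Real.cos_arccos hl1.le hl2.le]
  have hss : ((Real.sin (Real.arccos lam) : ℝ) : ℂ) = (s : ℂ) := by
    rw [Real.sin_arccos]
  refine ⟨key μp hquadp, key μm hquadm, ?_, ?_⟩
  · rw [mul_comm, Complex.exp_mul_I, ← Complex.ofReal_cos, ← Complex.ofReal_sin,
      hcs, hss, hμp]
    ring
  · rw [show -(Complex.I * ((Real.arccos lam : ℝ) : ℂ))
        = ((-(Real.arccos lam) : ℝ) : ℂ) * Complex.I by push_cast; ring,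
      Complex.exp_mul_I, ← Complex.ofReal_cos, ← Complex.ofReal_sin,
      Real.cos_neg, Real.sin_neg, hcs, Complex.ofReal_neg, hss, hμm]
    ring
end
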